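/- Let K be a field, m, σ ≥ 1, E ∈ K^{m×σ}, J ∈ K^{σ×σ}, and s ∈ ℤ^m. Then there exists exactly one matrix P ∈ K[X]^{m×m} in s-Popov form whose rows form a basis of the K[X]-module of interpolants for (E,J). -/

import Mathlib

open Polynomial Matrix

/-- Degree of a polynomial as an element of `WithBot ℤ`, with `degZ 0 = ⊥`. -/
noncomputable def degZ {K : Type*} [Field K] (p : Polynomial K) : WithBot ℤ :=
  p.degree.map (fun n : ℕ => (n : ℤ))

/-- The `s`-degree of a row vector `p`: `max_j (deg p_j + s_j)`. -/
noncomputable def sdeg {K : Type*} [Field K] {ι : Type*} [Fintype ι]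
    (s : ι → ℤ) (p : ι → Polynomial K) : WithBot ℤ :=
  Finset.univ.sup fun j => degZ (p j) + (s j : WithBot ℤ)

/-- `j` is the `s`-pivot index of the row `p`: the largest index at which the
`s`-degree of `p` is attained. -/
def IsPivotIndex {K : Type*} [Field K] {ι : Type*} [Fintype ι] [LinearOrder ι]
    (s : ι → ℤ) (p : ι → Polynomial K) (j : ι) : Prop :=
  degZ (p j) + (s j : WithBot ℤ) = sdeg s p ∧
    ∀ k, j < k → degZ (p k) + (s k : WithBot ℤ) ≠ sdeg s p

/-- `P` is in `s`-Popov form: it is nonsingular, the `s`-pivot entries are monic and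
on the diagonal, and in each column the nonpivot entries have degree less than
the pivot entry. -/
def IsPopov {K : Type*} [Field K] {m : ℕ} (s : Fin m → ℤ)
    (P : Matrix (Fin m) (Fin m) (Polynomial K)) : Prop :=
  P.det ≠ 0 ∧ (∀ i, IsPivotIndex s (P i) i) ∧ (∀ i, (P i i).Monic) ∧
    ∀ i j, i ≠ j → (P i j).degree < (P j j).degree

/-- `p` is an interpolant for `(E, J)`: `∑ i, (row i of E) ⋅ (p i)(J) = 0`. -/
def IsInterpolant {K : Type*} [Field K] {ι n : Type*} [Fintype ι] [Fintype n] [DecidableEq n]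
    (E : Matrix ι n K) (J : Matrix n n K) (p : ι → Polynomial K) : Prop :=
  ∑ i, Matrix.vecMul (E i) (Polynomial.aeval J (p i)) = 0

/-- `P` is an interpolation basis for `(E, J)`: its rows form a basis of the
`K[X]`-module of interpolants for `(E, J)`. -/
def IsInterpolationBasis {K : Type*} [Field K] {ι n : Type*} [Fintype ι] [Fintype n]
    [DecidableEq n] (E : Matrix ι n K) (J : Matrix n n K)
    (P : Matrix ι ι (Polynomial K)) : Prop :=
  LinearIndependent (Polynomial K) (fun i => P i) ∧
    (Submodule.span (Polynomial K) (Set.range fun i => P i) : Set (ι → Polynomial K))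
      = {p | IsInterpolant E J p}

/-- The product `Q ⋅ E`: the matrix over `K` whose `i`-th row is `∑ j, (E j) ⋅ (Q i j)(J)`. -/
noncomputable def polMulMat {K : Type*} [Field K] {κ ι n : Type*} [Fintype κ] [Fintype ι]
    [Fintype n] [DecidableEq n]
    (Q : Matrix κ ι (Polynomial K)) (E : Matrix ι n K) (J : Matrix n n K) : Matrix κ n K :=
  fun i => ∑ j, Matrix.vecMul (E j) (Polynomial.aeval J (Q i j))

/-- The `s`-leading matrix of `R`: if row `i` has `s`-degree `d`, its `(i,j)` entry is
the coefficient of degree `d - s j` in `R i j` (and `0` if row `i` is zero). -/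
noncomputable def leadingMatrix {K : Type*} [Field K] {ι : Type*} [Fintype ι]
    (s : ι → ℤ) (R : Matrix ι ι (Polynomial K)) : Matrix ι ι K := fun i j =>
  WithBot.recBotCoe 0
    (fun d => if 0 ≤ d - s j then (R i j).coeff (d - s j).toNat else 0)
    (sdeg s (R i))


namespace PopovAux_hide
end PopovAux_hide

namespace PopovAux

variable {K : Type*} [Field K]

/-! ### WithBot ℤ helpers -/

lemma wb_add_le_iff {x : WithBot ℤ} {a d : ℤ} :
    x + (a : WithBot ℤ) ≤ (d : WithBot ℤ) ↔ x ≤ ((d - a : ℤ) : WithBot ℤ) := by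
  cases x with
  | bot => simp
  | coe n =>
      rw [← WithBot.coe_add, WithBot.coe_le_coe, WithBot.coe_le_coe]; omega

lemma wb_add_lt_iff {x : WithBot ℤ} {a d : ℤ} :
    x + (a : WithBot ℤ) < (d : WithBot ℤ) ↔ x < ((d - a : ℤ) : WithBot ℤ) := by
  cases x with
  | bot => simp [WithBot.bot_lt_coe]
  | coe n =>
      rw [← WithBot.coe_add, WithBot.coe_lt_coe, WithBot.coe_lt_coe]; omega

lemma wb_le_add_iff {x : WithBot ℤ} {a d : ℤ} :
    (d : WithBot ℤ) ≤ x + (a : WithBot ℤ) ↔ ((d - a : ℤ) : WithBot ℤ) ≤ x := by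
  cases x with
  | bot => simp
  | coe n =>
      rw [← WithBot.coe_add, WithBot.coe_le_coe, WithBot.coe_le_coe]; omega

lemma wb_lt_iff_le_sub_one {x : WithBot ℤ} {d : ℤ} :
    x < (d : WithBot ℤ) ↔ x ≤ ((d - 1 : ℤ) : WithBot ℤ) := by
  cases x with
  | bot => simp [WithBot.bot_lt_coe]
  | coe n => rw [WithBot.coe_lt_coe, WithBot.coe_le_coe]; omega

/-! ### degZ basics -/

@[simp] lemma degZ_zero : degZ (0 : K[X]) = ⊥ := by simp [degZ]

lemma degZ_eq_bot_iff {p : K[X]} : degZ p = ⊥ ↔ p = 0 := by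
  unfold degZ
  rw [WithBot.map_eq_bot_iff, Polynomial.degree_eq_bot]

lemma degZ_eq_natDegree {p : K[X]} (hp : p ≠ 0) : degZ p = ((p.natDegree : ℤ) : WithBot ℤ) := by
  unfold degZ
  rw [Polynomial.degree_eq_natDegree hp]
  rfl

lemma degZ_le_degZ_iff {p q : K[X]} : degZ p ≤ degZ q ↔ p.degree ≤ q.degree :=
  WithBot.map_le_iff _ (fun {a b} => Nat.cast_le)

lemma degree_lt_degree_of_degZ_lt {p q : K[X]} (h : degZ p < degZ q) :
    p.degree < q.degree := by
  by_contra hc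
  exact absurd (degZ_le_degZ_iff.mpr (not_lt.mp hc)) (not_le.mpr h)

lemma degZ_le_iff_degree_le {p : K[X]} {n : ℕ} :
    degZ p ≤ ((n : ℤ) : WithBot ℤ) ↔ p.degree ≤ (n : WithBot ℕ) := by
  have : ((n : ℤ) : WithBot ℤ) = degZ (X ^ n : K[X]) := by
    unfold degZ; rw [Polynomial.degree_X_pow]; rfl
  rw [this, degZ_le_degZ_iff, Polynomial.degree_X_pow]

lemma degZ_mul {p q : K[X]} : degZ (p * q) = degZ p + degZ q := by
  unfold degZ
  rw [Polynomial.degree_mul]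
  cases hp : p.degree with
  | bot => simp
  | coe n => cases hq : q.degree with
    | bot => simp
    | coe k => simp [← WithBot.coe_add]

lemma degZ_add_le (p q : K[X]) : degZ (p + q) ≤ max (degZ p) (degZ q) := by
  rcases le_total p.degree q.degree with h | h
  · exact le_max_of_le_right (degZ_le_degZ_iff.mpr
      ((Polynomial.degree_add_le p q).trans (max_eq_right h).le))
  · exact le_max_of_le_left (degZ_le_degZ_iff.mpr
      ((Polynomial.degree_add_le p q).trans (max_eq_left h).le))

lemma degZ_sub_le (p q : K[X]) : degZ (p - q) ≤ max (degZ p) (degZ q) := by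
  have := degZ_add_le p (-q)
  have hneg : degZ (-q) = degZ q := by unfold degZ; rw [Polynomial.degree_neg]
  rw [hneg] at this
  simpa [sub_eq_add_neg] using this

lemma degZ_C_mul_X_pow_le (a : K) (n : ℕ) :
    degZ (Polynomial.C a * X ^ n) ≤ ((n : ℤ) : WithBot ℤ) := by
  rw [degZ_le_iff_degree_le]
  exact (Polynomial.degree_C_mul_X_pow_le n a)

/-! ### coeffZ -/

noncomputable def coeffZ (p : K[X]) (d : ℤ) : K := if 0 ≤ d then p.coeff d.toNat else 0

@[simp] lemma coeffZ_zero (d : ℤ) : coeffZ (0 : K[X]) d = 0 := by simp [coeffZ]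

lemma coeffZ_add (p q : K[X]) (d : ℤ) : coeffZ (p + q) d = coeffZ p d + coeffZ q d := by
  unfold coeffZ; split
  · rw [Polynomial.coeff_add]
  · rw [add_zero]

lemma coeffZ_sub (p q : K[X]) (d : ℤ) : coeffZ (p - q) d = coeffZ p d - coeffZ q d := by
  unfold coeffZ; split
  · rw [Polynomial.coeff_sub]
  · rw [sub_zero]

lemma coeffZ_sum {ι : Type*} (t : Finset ι) (f : ι → K[X]) (d : ℤ) :
    coeffZ (∑ i ∈ t, f i) d = ∑ i ∈ t, coeffZ (f i) d := by
  classical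
  induction t using Finset.induction with
  | empty => simp
  | insert _ _ h ih => rw [Finset.sum_insert h, Finset.sum_insert h, coeffZ_add, ih]

lemma eq_zero_of_degZ_le_neg {p : K[X]} {a : ℤ} (h : degZ p ≤ (a : WithBot ℤ)) (ha : a < 0) :
    p = 0 := by
  by_contra hc
  rw [degZ_eq_natDegree hc, WithBot.coe_le_coe] at h
  omega

lemma coeffZ_eq_zero_of_degZ_lt {p : K[X]} {e : ℤ} (h : degZ p < (e : WithBot ℤ)) :
    coeffZ p e = 0 := by
  rcases eq_or_ne p 0 with rfl | hp
  · simp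
  unfold coeffZ
  split
  case isFalse => rfl
  case isTrue he =>
    apply Polynomial.coeff_eq_zero_of_natDegree_lt
    rw [degZ_eq_natDegree hp, WithBot.coe_lt_coe] at h
    omega

lemma le_degZ_of_coeffZ_ne_zero {p : K[X]} {e : ℤ} (h : coeffZ p e ≠ 0) :
    (e : WithBot ℤ) ≤ degZ p := by
  unfold coeffZ at h
  split at h
  case isFalse => exact absurd rfl h
  case isTrue he =>
    have := Polynomial.le_degree_of_ne_zero h
    have hp : p ≠ 0 := fun h0 => by simp [h0] at h
    rw [degZ_eq_natDegree hp, WithBot.coe_le_coe]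
    have := Polynomial.le_natDegree_of_ne_zero h
    omega

lemma coeffZ_degZ {p : K[X]} {e : ℤ} (h : degZ p = (e : WithBot ℤ)) :
    coeffZ p e = p.leadingCoeff := by
  have hp : p ≠ 0 := fun h0 => by simp [h0] at h
  rw [degZ_eq_natDegree hp] at h
  have he : e = p.natDegree := by exact_mod_cast h.symm
  subst he
  unfold coeffZ
  rw [if_pos (Int.natCast_nonneg _), Int.toNat_natCast]
  rfl

lemma coeffZ_mul {p q : K[X]} {a b : ℤ} (hp : degZ p ≤ (a : WithBot ℤ))
    (hq : degZ q ≤ (b : WithBot ℤ)) :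
    coeffZ (p * q) (a + b) = coeffZ p a * coeffZ q b := by
  rcases lt_or_ge a 0 with ha | ha
  · have hz : p = 0 := eq_zero_of_degZ_le_neg hp ha
    simp [hz, coeffZ, ha.not_ge]
  rcases lt_or_ge b 0 with hb | hb
  · have hz : q = 0 := eq_zero_of_degZ_le_neg hq hb
    simp [hz, coeffZ, hb.not_ge]
  · have hpn : p.natDegree ≤ a.toNat := by
      rcases eq_or_ne p 0 with rfl | hp0
      · simp
      · rw [degZ_eq_natDegree hp0, WithBot.coe_le_coe] at hp; omega
    have hqn : q.natDegree ≤ b.toNat := by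
      rcases eq_or_ne q 0 with rfl | hq0
      · simp
      · rw [degZ_eq_natDegree hq0, WithBot.coe_le_coe] at hq; omega
    have hab : (a + b).toNat = a.toNat + b.toNat := by omega
    simp only [coeffZ, if_pos ha, if_pos hb, if_pos (by omega : (0:ℤ) ≤ a + b), hab]
    exact Polynomial.coeff_mul_add_eq_of_natDegree_le hpn hqn


section Sdeg
variable {m : ℕ} {s : Fin m → ℤ}

local notation "V" => Fin m → Polynomial K

lemma entry_le_sdeg (p : V) (j : Fin m) : degZ (p j) + (s j : WithBot ℤ) ≤ sdeg s p := by
  unfold sdeg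
  exact Finset.le_sup (f := fun j => degZ (p j) + (s j : WithBot ℤ)) (Finset.mem_univ j)

lemma sdeg_le_iff {p : V} {D : WithBot ℤ} :
    sdeg s p ≤ D ↔ ∀ j, degZ (p j) + (s j : WithBot ℤ) ≤ D := by
  rw [sdeg, Finset.sup_le_iff]
  simp

lemma sdeg_eq_bot_iff {p : V} : sdeg s p = ⊥ ↔ p = 0 := by
  constructor
  · intro h
    funext j
    have := (le_of_eq h).trans' (entry_le_sdeg p j)
    rw [le_bot_iff, WithBot.add_eq_bot] at this
    rcases this with h' | h'
    · exact degZ_eq_bot_iff.mp h'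
    · exact absurd h' (WithBot.coe_ne_bot)
  · intro h
    subst h
    rw [← le_bot_iff, sdeg_le_iff]
    intro j
    show degZ (0 : K[X]) + _ ≤ ⊥
    rw [degZ_eq_bot_iff.mpr rfl, WithBot.bot_add]

lemma exists_sdeg_coe {p : V} (hp : p ≠ 0) : ∃ d : ℤ, sdeg s p = (d : WithBot ℤ) := by
  have h := sdeg_eq_bot_iff (s := s) (p := p)
  cases hd : sdeg s p with
  | bot => exact absurd (h.mp hd) hp
  | coe d => exact ⟨d, rfl⟩

lemma exists_pivot {p : V} (hp : p ≠ 0) : ∃ j, IsPivotIndex s p j := by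
  classical
  have hne : ∃ j, p j ≠ 0 := by
    by_contra hc
    push_neg at hc
    exact hp (funext hc)
  obtain ⟨j0, _⟩ := hne
  obtain ⟨j1, hj1⟩ := Finset.exists_mem_eq_sup Finset.univ ⟨j0, Finset.mem_univ j0⟩
    (fun j => degZ (p j) + (s j : WithBot ℤ))
  set t := Finset.univ.filter (fun j => degZ (p j) + (s j : WithBot ℤ) = sdeg s p) with ht
  have htne : t.Nonempty := ⟨j1, by rw [ht, Finset.mem_filter]; exact ⟨Finset.mem_univ _, hj1.2.symm⟩⟩
  refine ⟨t.max' htne, ?_, ?_⟩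
  · exact (Finset.mem_filter.mp (t.max'_mem htne)).2
  · intro k hk hke
    have : k ∈ t := by rw [ht, Finset.mem_filter]; exact ⟨Finset.mem_univ k, hke⟩
    exact absurd (t.le_max' k this) (not_le.mpr hk)

lemma pivot_unique {p : V} {j k : Fin m} (hj : IsPivotIndex s p j) (hk : IsPivotIndex s p k) :
    j = k := by
  rcases lt_trichotomy j k with h | h | h
  · exact absurd hk.1 (hj.2 k h)
  · exact h
  · exact absurd hj.1 (hk.2 j h)

noncomputable def svalAt (s : Fin m → ℤ) (d : ℤ) (j : Fin m) (p : V) : K :=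
  coeffZ (p j) (d - s j)

lemma svalAt_sub (d : ℤ) (j : Fin m) (p q : V) :
    svalAt s d j (p - q) = svalAt s d j p - svalAt s d j q := coeffZ_sub _ _ _

lemma svalAt_sum {ι : Type*} (t : Finset ι) (f : ι → V) (d : ℤ) (j : Fin m) :
    svalAt s d j (∑ i ∈ t, f i) = ∑ i ∈ t, svalAt s d j (f i) := by
  unfold svalAt
  rw [← coeffZ_sum]
  congr 1
  exact (Finset.sum_apply j t f)

lemma svalAt_eq_zero_of_lt {d : ℤ} {j : Fin m} {p : V}
    (h : degZ (p j) + (s j : WithBot ℤ) < (d : WithBot ℤ)) : svalAt s d j p = 0 :=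
  coeffZ_eq_zero_of_degZ_lt (wb_add_lt_iff.mp h)

lemma le_of_svalAt_ne_zero {d : ℤ} {j : Fin m} {p : V} (h : svalAt s d j p ≠ 0) :
    (d : WithBot ℤ) ≤ degZ (p j) + (s j : WithBot ℤ) := by
  have := le_degZ_of_coeffZ_ne_zero h
  rw [wb_le_add_iff]
  exact this

lemma svalAt_eq_lc {d : ℤ} {j : Fin m} {p : V}
    (h : degZ (p j) + (s j : WithBot ℤ) = (d : WithBot ℤ)) :
    svalAt s d j p = (p j).leadingCoeff := by
  apply coeffZ_degZ
  have : degZ (p j) ≤ ((d - s j : ℤ) : WithBot ℤ) := wb_add_le_iff.mp h.le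
  rcases eq_or_lt_of_le this with h' | h'
  · exact h'
  · exact absurd h (by rw [← wb_add_lt_iff] at h'; exact h'.ne)

lemma smul_entry (c : Polynomial K) (q : V) (l : Fin m) : (c • q) l = c * q l := rfl

lemma smul_entry_le {c : Polynomial K} {q : V} {l : Fin m} {d e : ℤ}
    (hc : degZ c ≤ ((d - e : ℤ) : WithBot ℤ))
    (hq : degZ (q l) + (s l : WithBot ℤ) ≤ (e : WithBot ℤ)) :
    degZ ((c • q) l) + (s l : WithBot ℤ) ≤ (d : WithBot ℤ) := by
  rw [smul_entry, degZ_mul, wb_add_le_iff] at *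
  calc degZ c + degZ (q l) ≤ ((d - e : ℤ) : WithBot ℤ) + ((e - s l : ℤ) : WithBot ℤ) :=
        add_le_add hc hq
    _ = ((d - s l : ℤ) : WithBot ℤ) := by rw [← WithBot.coe_add]; congr 1; ring

lemma smul_entry_lt {c : Polynomial K} {q : V} {l : Fin m} {d e : ℤ}
    (hc : degZ c ≤ ((d - e : ℤ) : WithBot ℤ))
    (hq : degZ (q l) + (s l : WithBot ℤ) < (e : WithBot ℤ)) :
    degZ ((c • q) l) + (s l : WithBot ℤ) < (d : WithBot ℤ) := by
  rw [wb_add_lt_iff] at hq ⊢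
  rw [smul_entry, degZ_mul]
  cases hcc : degZ c with
  | bot => rw [WithBot.bot_add]; exact WithBot.bot_lt_coe _
  | coe n =>
      rw [hcc] at hc
      calc (n : WithBot ℤ) + degZ (q l) < (n : WithBot ℤ) + ((e - s l : ℤ) : WithBot ℤ) :=
            WithBot.add_lt_add_left WithBot.coe_ne_bot hq
        _ ≤ ((d - e : ℤ) : WithBot ℤ) + ((e - s l : ℤ) : WithBot ℤ) := add_le_add hc le_rfl
        _ = ((d - s l : ℤ) : WithBot ℤ) := by rw [← WithBot.coe_add]; congr 1; ring

lemma svalAt_smul {c : Polynomial K} {q : V} {l : Fin m} {d e : ℤ}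
    (hc : degZ c ≤ ((d - e : ℤ) : WithBot ℤ))
    (hq : degZ (q l) + (s l : WithBot ℤ) ≤ (e : WithBot ℤ)) :
    svalAt s d l (c • q) = coeffZ c (d - e) * svalAt s e l q := by
  unfold svalAt
  rw [smul_entry]
  have : d - s l = (d - e) + (e - s l) := by ring
  rw [this, coeffZ_mul hc (wb_add_le_iff.mp hq)]

end Sdeg

section Combo
variable {m : ℕ} {s : Fin m → ℤ}

local notation "V" => Fin m → Polynomial K

@[simp] lemma svalAt_zero (d : ℤ) (j : Fin m) : svalAt s d j (0 : V) = 0 := by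
  unfold svalAt
  show coeffZ (0 : K[X]) _ = 0
  simp

lemma degZ_sum_le {ι : Type*} (t : Finset ι) (f : ι → K[X]) {D : WithBot ℤ}
    (h : ∀ j ∈ t, degZ (f j) ≤ D) : degZ (∑ j ∈ t, f j) ≤ D := by
  classical
  induction t using Finset.induction with
  | empty => simp
  | @insert a t ha ih =>
      rw [Finset.sum_insert ha]
      exact (degZ_add_le _ _).trans (max_le (h a (Finset.mem_insert_self a t))
        (ih fun j hj => h j (Finset.mem_insert_of_mem hj)))

lemma sum_smul_apply (c : Fin m → K[X]) (q : Fin m → V) (l : Fin m) :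
    (∑ j, c j • q j) l = ∑ j, (c j • q j) l := Finset.sum_apply l _ _

lemma combo_bound {q : Fin m → V} {dd : Fin m → ℤ}
    (hq_sdeg : ∀ j, sdeg s (q j) = (dd j : WithBot ℤ))
    (hq_piv : ∀ j, IsPivotIndex s (q j) j)
    (hq_mon : ∀ j, ((q j) j).Monic)
    {c : Fin m → K[X]} {d : ℤ} {i : Fin m}
    (hsd : sdeg dd c = (d : WithBot ℤ)) (hpiv : IsPivotIndex dd c i) :
    svalAt s d i (∑ j, c j • q j) = (c i).leadingCoeff ∧
    (∀ l, degZ ((∑ j, c j • q j) l) + (s l : WithBot ℤ) ≤ (d : WithBot ℤ)) ∧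
    (∀ l, i < l → degZ ((∑ j, c j • q j) l) + (s l : WithBot ℤ) < (d : WithBot ℤ)) := by
  have hc_le : ∀ j, degZ (c j) ≤ ((d - dd j : ℤ) : WithBot ℤ) := by
    intro j
    refine wb_add_le_iff.mp ?_
    rw [← hsd]
    exact entry_le_sdeg (s := dd) c j
  have hentry : ∀ j l, degZ (q j l) + (s l : WithBot ℤ) ≤ (dd j : WithBot ℤ) := by
    intro j l
    rw [← hq_sdeg j]
    exact entry_le_sdeg (q j) l
  have hstrict_entry : ∀ j l, j < l → degZ (q j l) + (s l : WithBot ℤ) < (dd j : WithBot ℤ) := by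
    intro j l hjl
    refine lt_of_le_of_ne (hentry j l) ?_
    have := (hq_piv j).2 l hjl
    rw [hq_sdeg j] at this
    exact this
  have hc_strict : ∀ j, i < j → degZ (c j) + (dd j : WithBot ℤ) < (d : WithBot ℤ) := by
    intro j hij
    refine lt_of_le_of_ne ?_ ?_
    · rw [← hsd]; exact entry_le_sdeg (s := dd) c j
    · have := hpiv.2 j hij
      rw [hsd] at this
      exact this
  refine ⟨?_, ?_, ?_⟩
  · rw [svalAt_sum]
    rw [Finset.sum_eq_single i]
    · rw [svalAt_smul (hc_le i) (hentry i i)]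
      have h1 : coeffZ (c i) (d - dd i) = (c i).leadingCoeff := by
        have := hpiv.1
        rw [hsd] at this
        exact svalAt_eq_lc (s := dd) this
      have h2 : svalAt s (dd i) i (q i) = 1 := by
        have hp := (hq_piv i).1
        rw [hq_sdeg i] at hp
        rw [svalAt_eq_lc hp]
        exact hq_mon i
      rw [h1, h2, mul_one]
    · intro j _ hji
      rw [svalAt_smul (hc_le j) (hentry j i)]
      rcases lt_or_gt_of_ne hji with hlt | hgt
      · rw [svalAt_eq_zero_of_lt (hstrict_entry j i hlt), mul_zero]
      · have : degZ (c j) < ((d - dd j : ℤ) : WithBot ℤ) := wb_add_lt_iff.mp (hc_strict j hgt)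
        rw [coeffZ_eq_zero_of_degZ_lt this, zero_mul]
    · intro h
      exact absurd (Finset.mem_univ i) h
  · intro l
    rw [sum_smul_apply, wb_add_le_iff]
    refine degZ_sum_le _ _ ?_
    intro j _
    exact wb_add_le_iff.mp (smul_entry_le (hc_le j) (hentry j l))
  · intro l hil
    rw [sum_smul_apply]
    have hd1 : degZ (∑ j, (c j • q j) l) + (s l : WithBot ℤ) ≤ ((d - 1 : ℤ) : WithBot ℤ) := by
      rw [wb_add_le_iff]
      refine degZ_sum_le _ _ ?_
      intro j _
      refine wb_add_le_iff.mp ?_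
      rw [← wb_lt_iff_le_sub_one]
      rcases eq_or_lt_of_le ((hsd ▸ entry_le_sdeg (s := dd) c j : degZ (c j) + (dd j : WithBot ℤ) ≤ (d : WithBot ℤ))) with heq | hlt
      · have hji : j ≤ i := by
          by_contra hcon
          push_neg at hcon
          exact absurd heq (hc_strict j hcon).ne
        exact smul_entry_lt (hc_le j) (hstrict_entry j l (lt_of_le_of_lt hji hil))
      · have : degZ (c j) < ((d - dd j : ℤ) : WithBot ℤ) := wb_add_lt_iff.mp hlt
        have hc' : degZ (c j) ≤ (((d - 1) - dd j : ℤ) : WithBot ℤ) := by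
          rw [wb_lt_iff_le_sub_one] at this
          convert this using 2
          ring
        exact lt_of_le_of_lt (smul_entry_le hc' (hentry j l))
          (WithBot.coe_lt_coe.mpr (by omega))
    calc degZ (∑ j, (c j • q j) l) + (s l : WithBot ℤ) ≤ ((d - 1 : ℤ) : WithBot ℤ) := hd1
      _ < (d : WithBot ℤ) := WithBot.coe_lt_coe.mpr (by omega)

lemma combo_props {q : Fin m → V} {dd : Fin m → ℤ}
    (hq_sdeg : ∀ j, sdeg s (q j) = (dd j : WithBot ℤ))
    (hq_piv : ∀ j, IsPivotIndex s (q j) j)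
    (hq_mon : ∀ j, ((q j) j).Monic)
    {c : Fin m → K[X]} (hc : c ≠ 0) :
    ∃ (d : ℤ) (i : Fin m), c i ≠ 0 ∧ (∑ j, c j • q j) ≠ 0 ∧
      sdeg s (∑ j, c j • q j) = (d : WithBot ℤ) ∧ IsPivotIndex s (∑ j, c j • q j) i ∧
      (dd i : ℤ) ≤ d := by
  obtain ⟨d, hd⟩ := exists_sdeg_coe (s := dd) hc
  obtain ⟨i, hi⟩ := exists_pivot (s := dd) hc
  obtain ⟨h1, h2, h3⟩ := combo_bound hq_sdeg hq_piv hq_mon hd hi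
  have hci : c i ≠ 0 := by
    intro h0
    have := hi.1
    rw [hd, h0, degZ_eq_bot_iff.mpr rfl, WithBot.bot_add] at this
    exact absurd this (by simp)
  have hsval : svalAt s d i (∑ j, c j • q j) ≠ 0 := by
    rw [h1]
    exact Polynomial.leadingCoeff_ne_zero.mpr hci
  have hv0 : (∑ j, c j • q j) ≠ 0 := by
    intro h0
    rw [h0] at hsval
    exact hsval (svalAt_zero d i)
  have hattain : degZ ((∑ j, c j • q j) i) + (s i : WithBot ℤ) = (d : WithBot ℤ) :=
    le_antisymm (h2 i) (le_of_svalAt_ne_zero hsval)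
  have hsd : sdeg s (∑ j, c j • q j) = (d : WithBot ℤ) := by
    refine le_antisymm (sdeg_le_iff.mpr h2) ?_
    rw [← hattain]
    exact entry_le_sdeg _ i
  refine ⟨d, i, hci, hv0, hsd, ⟨by rw [hsd]; exact hattain, ?_⟩, ?_⟩
  · intro k hk
    rw [hsd]
    exact (h3 k hk).ne
  · have := hi.1
    rw [hd, degZ_eq_natDegree hci, ← WithBot.coe_add, WithBot.coe_inj] at this
    omega

end Combo

section Gen
variable {m : ℕ} {s : Fin m → ℤ}

local notation "V" => Fin m → Polynomial K

lemma coeffZ_C_mul_X_pow (a : K) (n : ℕ) {d : ℤ} (h : d = (n : ℤ)) :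
    coeffZ (Polynomial.C a * X ^ n) d = a := by
  subst h
  unfold coeffZ
  rw [if_pos (Int.natCast_nonneg n), Int.toNat_natCast]
  simp [Polynomial.coeff_C_mul, Polynomial.coeff_X_pow]

lemma sub_entry_le {a b : K[X]} {sl d : ℤ}
    (ha : degZ a + (sl : WithBot ℤ) ≤ (d : WithBot ℤ))
    (hb : degZ b + (sl : WithBot ℤ) ≤ (d : WithBot ℤ)) :
    degZ (a - b) + (sl : WithBot ℤ) ≤ (d : WithBot ℤ) := by
  rw [wb_add_le_iff] at *
  exact (degZ_sub_le a b).trans (max_le ha hb)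

lemma sub_entry_lt {a b : K[X]} {sl d : ℤ}
    (ha : degZ a + (sl : WithBot ℤ) < (d : WithBot ℤ))
    (hb : degZ b + (sl : WithBot ℤ) < (d : WithBot ℤ)) :
    degZ (a - b) + (sl : WithBot ℤ) < (d : WithBot ℤ) := by
  rw [wb_add_lt_iff] at *
  exact (degZ_sub_le a b).trans_lt (max_lt ha hb)

lemma cancel {q : V} {k : Fin m} {dq : ℤ}
    (hq_sdeg : sdeg s q = (dq : WithBot ℤ)) (hq_piv : IsPivotIndex s q k)
    (hq_mon : (q k).Monic) (v : V) {e : ℤ} (hle : dq ≤ e) :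
    ∃ c : Polynomial K,
      svalAt s e k (v - c • q) = 0 ∧
      (∀ l, degZ ((c • q) l) + (s l : WithBot ℤ) ≤ (e : WithBot ℤ)) ∧
      (∀ l, k < l → degZ ((c • q) l) + (s l : WithBot ℤ) < (e : WithBot ℤ)) := by
  set c : Polynomial K := Polynomial.C (svalAt s e k v) * X ^ (e - dq).toNat with hc_def
  have hc : degZ c ≤ ((e - dq : ℤ) : WithBot ℤ) := by
    have := degZ_C_mul_X_pow_le (svalAt s e k v) (e - dq).toNat
    rwa [Int.toNat_of_nonneg (by omega)] at this
  have hentry : ∀ l, degZ (q l) + (s l : WithBot ℤ) ≤ (dq : WithBot ℤ) := by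
    intro l
    rw [← hq_sdeg]
    exact entry_le_sdeg q l
  have hstrict : ∀ l, k < l → degZ (q l) + (s l : WithBot ℤ) < (dq : WithBot ℤ) := by
    intro l hl
    refine lt_of_le_of_ne (hentry l) ?_
    have := hq_piv.2 l hl
    rwa [hq_sdeg] at this
  refine ⟨c, ?_, fun l => smul_entry_le hc (hentry l),
    fun l hl => smul_entry_lt hc (hstrict l hl)⟩
  rw [svalAt_sub, svalAt_smul hc (hentry k)]
  have h1 : coeffZ c (e - dq) = svalAt s e k v := by
    rw [hc_def]
    exact coeffZ_C_mul_X_pow _ _ (by omega)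
  have h2 : svalAt s dq k q = 1 := by
    have hp := hq_piv.1
    rw [hq_sdeg] at hp
    rw [svalAt_eq_lc hp]
    exact hq_mon
  rw [h1, h2, mul_one, sub_self]

lemma rows_linearIndependent {q : Fin m → V} {dd : Fin m → ℤ}
    (hq_sdeg : ∀ j, sdeg s (q j) = (dd j : WithBot ℤ))
    (hq_piv : ∀ j, IsPivotIndex s (q j) j)
    (hq_mon : ∀ j, ((q j) j).Monic) :
    LinearIndependent (Polynomial K) q := by
  rw [Fintype.linearIndependent_iff]
  intro g hg i
  by_contra hgi
  have hg0 : g ≠ 0 := fun h => hgi (congrFun h i)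
  obtain ⟨d, i', _, hv0, _⟩ := combo_props hq_sdeg hq_piv hq_mon hg0
  exact hv0 hg

lemma generation {q : Fin m → V} {dd : Fin m → ℤ}
    (hq_sdeg : ∀ j, sdeg s (q j) = (dd j : WithBot ℤ))
    (hq_piv : ∀ j, IsPivotIndex s (q j) j)
    (hq_mon : ∀ j, ((q j) j).Monic)
    (M : Submodule (Polynomial K) (Fin m → Polynomial K))
    (hqM : ∀ j, q j ∈ M)
    (hmin : ∀ v ∈ M, v ≠ 0 → ∀ k, IsPivotIndex s v k → ((dd k : ℤ) : WithBot ℤ) ≤ sdeg s v)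
    {B : ℤ} (hB : ∀ j, B ≤ dd j) :
    ∀ v ∈ M, v ∈ Submodule.span (Polynomial K) (Set.range q) := by
  have key : ∀ n : ℕ, ∀ v, v ∈ M → ∀ (d : ℤ) (k : Fin m), sdeg s v = (d : WithBot ℤ) →
      IsPivotIndex s v k → (d - B).toNat * m + k.val ≤ n →
      v ∈ Submodule.span (Polynomial K) (Set.range q) := by
    intro n
    induction n using Nat.strong_induction_on with
    | _ n ih =>
    intro v hvM d k hd hk hn
    have hv0 : v ≠ 0 := by
      intro h0
      rw [h0, sdeg_eq_bot_iff.mpr rfl] at hd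
      exact absurd hd (by simp)
    have hdk : (dd k : ℤ) ≤ d := by
      have := hmin v hvM hv0 k hk
      rw [hd] at this
      exact WithBot.coe_le_coe.mp this
    obtain ⟨c, hzero, hble, hblt⟩ := cancel (hq_sdeg k) (hq_piv k) (hq_mon k) v (e := d) hdk
    rcases eq_or_ne (v - c • q k) 0 with h0 | h0
    · have hveq : v = c • q k := by rwa [sub_eq_zero] at h0
      rw [hveq]
      exact Submodule.smul_mem _ c (Submodule.subset_span ⟨k, rfl⟩)
    · have hv'M : v - c • q k ∈ M := M.sub_mem hvM (M.smul_mem c (hqM k))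
      obtain ⟨d', hd'⟩ := exists_sdeg_coe h0
      obtain ⟨k', hk'⟩ := exists_pivot h0
      have hvle : ∀ l, degZ (v l) + (s l : WithBot ℤ) ≤ (d : WithBot ℤ) := by
        intro l
        rw [← hd]
        exact entry_le_sdeg v l
      have hv'le : ∀ l, degZ ((v - c • q k) l) + (s l : WithBot ℤ) ≤ (d : WithBot ℤ) :=
        fun l => sub_entry_le (hvle l) (hble l)
      have hd'led : d' ≤ d := by
        have : sdeg s (v - c • q k) ≤ (d : WithBot ℤ) := sdeg_le_iff.mpr hv'le
        rw [hd'] at this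
        exact WithBot.coe_le_coe.mp this
      have hattl : ∀ l, k ≤ l → degZ ((v - c • q k) l) + (s l : WithBot ℤ) ≠ (d : WithBot ℤ) := by
        intro l hl
        rcases eq_or_lt_of_le hl with heq | hlt
        · intro hcon
          rw [← heq] at hcon
          have := svalAt_eq_lc hcon
          rw [hzero] at this
          have hne : (v - c • q k) k ≠ 0 := by
            intro hzz
            rw [hzz, degZ_eq_bot_iff.mpr rfl, WithBot.bot_add] at hcon
            exact absurd hcon (by simp)
          exact hne (Polynomial.leadingCoeff_eq_zero.mp this.symm)
        · have hvl : degZ (v l) + (s l : WithBot ℤ) < (d : WithBot ℤ) := by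
            refine lt_of_le_of_ne (hvle l) ?_
            have := hk.2 l hlt
            rwa [hd] at this
          exact (sub_entry_lt hvl (hblt l hlt)).ne
      have hk'k : d' = d → k'.val < k.val := by
        intro hdd
        by_contra hge
        push_neg at hge
        have hkk' : k ≤ k' := hge
        refine hattl k' hkk' ?_
        rw [hk'.1, hd', hdd]
      have hBd' : B ≤ d' := by
        have h1 := hmin _ hv'M h0 k' hk'
        rw [hd'] at h1
        have := WithBot.coe_le_coe.mp h1
        have := hB k'
        omega
      have hmeas : (d' - B).toNat * m + k'.val < n := by
        have hkm : k'.val < m := k'.isLt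
        have hkm2 : k.val < m := k.isLt
        rcases lt_or_eq_of_le hd'led with hlt | heq
        · have h1 : (d' - B).toNat + 1 ≤ (d - B).toNat := by omega
          calc (d' - B).toNat * m + k'.val < ((d' - B).toNat + 1) * m := by
                rw [Nat.add_mul, one_mul]; omega
            _ ≤ (d - B).toNat * m := Nat.mul_le_mul_right m h1
            _ ≤ (d - B).toNat * m + k.val := Nat.le_add_right _ _
            _ ≤ n := hn
        · have hkv := hk'k heq
          have : (d' - B).toNat = (d - B).toNat := by omega
          rw [this]
          omega
      have hspan' : v - c • q k ∈ Submodule.span (Polynomial K) (Set.range q) :=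
        ih _ hmeas _ hv'M d' k' hd' hk' le_rfl
      have : v = (v - c • q k) + c • q k := by ring
      rw [this]
      exact Submodule.add_mem _ hspan'
        (Submodule.smul_mem _ c (Submodule.subset_span ⟨k, rfl⟩))
  intro v hv
  rcases eq_or_ne v 0 with rfl | hv0
  · exact Submodule.zero_mem _
  · obtain ⟨d, hd⟩ := exists_sdeg_coe hv0
    obtain ⟨k, hk⟩ := exists_pivot hv0
    exact key ((d - B).toNat * m + k.val) v hv d k hd hk le_rfl

end Gen

section Reduce
variable {m : ℕ} {s : Fin m → ℤ}

local notation "V" => Fin m → Polynomial K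

lemma toNat_lex_lt {B e1 e2 : ℤ} {l1 l2 N : ℕ} (h1 : B ≤ e1) (hl1 : l1 < N)
    (h : e1 < e2 ∨ (e1 = e2 ∧ l1 < l2)) :
    (e1 - B).toNat * N + l1 < (e2 - B).toNat * N + l2 := by
  rcases h with h | ⟨heq, hlt⟩
  · have hab : (e1 - B).toNat + 1 ≤ (e2 - B).toNat := by omega
    calc (e1 - B).toNat * N + l1 < ((e1 - B).toNat + 1) * N := by
          rw [Nat.add_mul, one_mul]; omega
      _ ≤ (e2 - B).toNat * N := Nat.mul_le_mul_right N hab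
      _ ≤ (e2 - B).toNat * N + l2 := Nat.le_add_right _ _
  · rw [heq]
    omega

lemma toNat_lex_le {B e1 e2 : ℤ} {l1 l2 N : ℕ} (h1 : B ≤ e1) (h2 : B ≤ e2)
    (hl1 : l1 < N) (hl2 : l2 < N)
    (h : (e1 - B).toNat * N + l1 ≤ (e2 - B).toNat * N + l2) :
    e1 ≤ e2 ∧ (e1 = e2 → l1 ≤ l2) := by
  constructor
  · by_contra hc
    push_neg at hc
    have hab : (e2 - B).toNat + 1 ≤ (e1 - B).toNat := by omega
    have h2' : (e2 - B).toNat * N + l2 < (e1 - B).toNat * N + l1 :=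
      calc (e2 - B).toNat * N + l2 < ((e2 - B).toNat + 1) * N := by
            rw [Nat.add_mul, one_mul]; omega
        _ ≤ (e1 - B).toNat * N := Nat.mul_le_mul_right N hab
        _ ≤ (e1 - B).toNat * N + l1 := Nat.le_add_right _ _
    omega
  · intro heq
    rw [heq] at h
    omega

lemma violator_val {x : WithBot ℤ} {a : ℤ} (h : (a : WithBot ℤ) ≤ x) :
    ∃ e : ℤ, x = (e : WithBot ℤ) ∧ a ≤ e := by
  cases x with
  | bot => exact absurd h (by simp)
  | coe e => exact ⟨e, rfl, WithBot.coe_le_coe.mp h⟩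

lemma lt_of_svalAt_eq_zero {w : V} {l : Fin m} {e : ℤ}
    (hle : degZ (w l) + (s l : WithBot ℤ) ≤ (e : WithBot ℤ)) (h0 : svalAt s e l w = 0) :
    degZ (w l) + (s l : WithBot ℤ) < (e : WithBot ℤ) := by
  refine lt_of_le_of_ne hle ?_
  intro hcon
  have hlc := svalAt_eq_lc hcon
  rw [h0] at hlc
  have hw : w l = 0 := Polynomial.leadingCoeff_eq_zero.mp hlc.symm
  rw [hw, degZ_zero, WithBot.bot_add] at hcon
  exact absurd hcon (by simp)

lemma sub_small {a b : K[X]} {sl : ℤ}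
    (h : degZ b + (sl : WithBot ℤ) < degZ a + (sl : WithBot ℤ)) :
    degZ (a - b) = degZ a ∧ (a.Monic → (a - b).Monic) := by
  have hdar : degZ b < degZ a := by
    cases ha : degZ a with
    | bot => rw [ha, WithBot.bot_add] at h; exact absurd h (by simp)
    | coe na =>
        rw [ha] at h
        rw [← WithBot.coe_add] at h
        have h2 := wb_add_lt_iff.mp h
        have h3 : na + sl - sl = na := by omega
        rwa [h3] at h2
  have hdeg : b.degree < a.degree := degree_lt_degree_of_degZ_lt hdar
  constructor
  · unfold degZ
    rw [Polynomial.degree_sub_eq_left_of_degree_lt hdeg]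
  · intro hmon
    exact hmon.sub_of_left hdeg

lemma reduce {q : Fin m → V} {dd : Fin m → ℤ}
    (hq_sdeg : ∀ j, sdeg s (q j) = (dd j : WithBot ℤ))
    (hq_piv : ∀ j, IsPivotIndex s (q j) j)
    (hq_mon : ∀ j, ((q j) j).Monic)
    (M : Submodule (Polynomial K) (Fin m → Polynomial K))
    (hqM : ∀ j, q j ∈ M) {B : ℤ} (hB : ∀ j, B ≤ dd j) (i : Fin m) :
    ∃ p : V, p ∈ M ∧ IsPivotIndex s p i ∧ sdeg s p = (dd i : WithBot ℤ) ∧ (p i).Monic ∧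
      ∀ l, l ≠ i → degZ (p l) + (s l : WithBot ℤ) < (dd l : WithBot ℤ) := by
  classical
  have key : ∀ n : ℕ, ∀ v, v ∈ M → IsPivotIndex s v i → sdeg s v = (dd i : WithBot ℤ) →
      (v i).Monic →
      (∀ (l : Fin m) (e : ℤ), l ≠ i → degZ (v l) + (s l : WithBot ℤ) = (e : WithBot ℤ) →
        dd l ≤ e → (e - B).toNat * m + l.val < n) →
      ∃ p : V, p ∈ M ∧ IsPivotIndex s p i ∧ sdeg s p = (dd i : WithBot ℤ) ∧ (p i).Monic ∧
        ∀ l, l ≠ i → degZ (p l) + (s l : WithBot ℤ) < (dd l : WithBot ℤ) := by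
    intro n
    induction n using Nat.strong_induction_on with
    | _ n ih =>
    intro v hvM hpiv hsdeg hmon hviol
    by_cases hTall : ∀ l, l ≠ i → degZ (v l) + (s l : WithBot ℤ) < (dd l : WithBot ℤ)
    · exact ⟨v, hvM, hpiv, hsdeg, hmon, hTall⟩
    · push_neg at hTall
      obtain ⟨l0, hl0i, hl0⟩ := hTall
      set T : Finset (Fin m) :=
        Finset.univ.filter
          (fun l => l ≠ i ∧ (dd l : WithBot ℤ) ≤ degZ (v l) + (s l : WithBot ℤ)) with hT_def
      have hl0T : l0 ∈ T := by
        rw [hT_def, Finset.mem_filter]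
        exact ⟨Finset.mem_univ l0, hl0i, hl0⟩
      set xv : Fin m → ℤ := fun l => WithBot.unbotD (B - 1) (degZ (v l) + (s l : WithBot ℤ)) with hxv
      have hval : ∀ l ∈ T, degZ (v l) + (s l : WithBot ℤ) = ((xv l : ℤ) : WithBot ℤ)
          ∧ dd l ≤ xv l ∧ l ≠ i := by
        intro l hl
        rw [hT_def, Finset.mem_filter] at hl
        obtain ⟨e, he, hde⟩ := violator_val hl.2.2
        have hx : xv l = e := by rw [hxv]; simp only [he]; rfl
        rw [hx]
        exact ⟨he, hde, hl.2.1⟩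
      obtain ⟨k, hkT, hkmax⟩ :=
        T.exists_max_image (fun l => (xv l - B).toNat * m + l.val) ⟨l0, hl0T⟩
      obtain ⟨hxk, hddk, hki⟩ := hval k hkT
      set e := xv k with he_def
      have heddi : ((e : ℤ) : WithBot ℤ) ≤ ((dd i : ℤ) : WithBot ℤ) := by
        rw [← hxk, ← hsdeg]
        exact entry_le_sdeg v k
      have heddiZ : e ≤ dd i := WithBot.coe_le_coe.mp heddi
      have hlex : ∀ l ∈ T, xv l < e ∨ (xv l = e ∧ l.val ≤ k.val) := by
        intro l hl
        obtain ⟨_, hddl, _⟩ := hval l hl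
        have h := hkmax l hl
        obtain ⟨hle2, himpl⟩ :=
          toNat_lex_le ((hB l).trans hddl) ((hB k).trans hddk) l.isLt k.isLt h
        rcases lt_or_eq_of_le hle2 with h' | h'
        · exact Or.inl h'
        · exact Or.inr ⟨h', himpl h'⟩
      obtain ⟨c, hzero, hble, hblt⟩ := cancel (hq_sdeg k) (hq_piv k) (hq_mon k) v (e := e) hddk
      set v' : V := v - c • q k with hv'_def
      have hv'M : v' ∈ M := M.sub_mem hvM (M.smul_mem c (hqM k))
      have he_lt_ddi : i < k → ((e : ℤ) : WithBot ℤ) < ((dd i : ℤ) : WithBot ℤ) := by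
        intro hik
        refine lt_of_le_of_ne heddi ?_
        intro hcon
        have hne := hpiv.2 k hik
        rw [hsdeg] at hne
        exact hne (by rw [hxk, hcon])
      have hpert_i : degZ ((c • q k) i) + (s i : WithBot ℤ) < ((dd i : ℤ) : WithBot ℤ) := by
        rcases lt_or_gt_of_ne hki with hik | hik
        · exact lt_of_lt_of_le (hblt i hik) heddi
        · exact lt_of_le_of_lt (hble i) (he_lt_ddi hik)
      have hxi : degZ (v i) + (s i : WithBot ℤ) = ((dd i : ℤ) : WithBot ℤ) := by
        rw [← hsdeg]
        exact hpiv.1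
      have hsubi := sub_small (a := v i) (b := (c • q k) i) (sl := s i) (by rw [hxi]; exact hpert_i)
      have hv'i_deg : degZ (v' i) = degZ (v i) := hsubi.1
      have hv'i_mon : (v' i).Monic := hsubi.2 hmon
      have hv'attain : degZ (v' i) + (s i : WithBot ℤ) = ((dd i : ℤ) : WithBot ℤ) := by
        rw [hv'i_deg]
        exact hxi
      have hvle : ∀ l, degZ (v l) + (s l : WithBot ℤ) ≤ ((dd i : ℤ) : WithBot ℤ) := by
        intro l
        rw [← hsdeg]
        exact entry_le_sdeg v l
      have hpertle : ∀ l, degZ ((c • q k) l) + (s l : WithBot ℤ) ≤ ((dd i : ℤ) : WithBot ℤ) :=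
        fun l => (hble l).trans heddi
      have hv'le : ∀ l, degZ (v' l) + (s l : WithBot ℤ) ≤ ((dd i : ℤ) : WithBot ℤ) :=
        fun l => sub_entry_le (hvle l) (hpertle l)
      have hv'sdeg : sdeg s v' = ((dd i : ℤ) : WithBot ℤ) := by
        refine le_antisymm (sdeg_le_iff.mpr hv'le) ?_
        rw [← hv'attain]
        exact entry_le_sdeg v' i
      have hv'gt : ∀ l, i < l → degZ (v' l) + (s l : WithBot ℤ) < ((dd i : ℤ) : WithBot ℤ) := by
        intro l hil
        have hvl : degZ (v l) + (s l : WithBot ℤ) < ((dd i : ℤ) : WithBot ℤ) := by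
          refine lt_of_le_of_ne (hvle l) ?_
          have := hpiv.2 l hil
          rwa [hsdeg] at this
        have hpertl : degZ ((c • q k) l) + (s l : WithBot ℤ) < ((dd i : ℤ) : WithBot ℤ) := by
          rcases lt_trichotomy k l with hkl | hkl | hkl
          · exact lt_of_lt_of_le (hblt l hkl) heddi
          · exact lt_of_le_of_lt (hble l) (he_lt_ddi (hkl ▸ hil))
          · have hik : i < k := lt_trans hil hkl
            exact lt_of_le_of_lt (hble l) (he_lt_ddi hik)
        exact sub_entry_lt hvl hpertl
      have hv'piv : IsPivotIndex s v' i := by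
        constructor
        · rw [hv'sdeg]; exact hv'attain
        · intro l hl
          rw [hv'sdeg]
          exact (hv'gt l hl).ne
      have hv'k : degZ (v' k) + (s k : WithBot ℤ) < ((e : ℤ) : WithBot ℤ) :=
        lt_of_svalAt_eq_zero (sub_entry_le (le_of_eq hxk) (hble k)) hzero
      have hnew : ∀ (l : Fin m) (e' : ℤ), l ≠ i →
          degZ (v' l) + (s l : WithBot ℤ) = (e' : WithBot ℤ) →
          dd l ≤ e' → e' < e ∨ (e' = e ∧ l.val < k.val) := by
        intro l e' hli hxl' hdl'
        by_cases hlk : l = k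
        · subst hlk
          rw [hxl'] at hv'k
          exact Or.inl (WithBot.coe_lt_coe.mp hv'k)
        · rcases lt_trichotomy (degZ (v l) + (s l : WithBot ℤ)) ((e : ℤ) : WithBot ℤ)
            with hlt | heq | hgt
          · rcases lt_trichotomy l k with hlk' | heqq | hgt'
            · have hb : degZ (v' l) + (s l : WithBot ℤ) ≤ ((e : ℤ) : WithBot ℤ) :=
                sub_entry_le hlt.le (hble l)
              rw [hxl'] at hb
              rcases lt_or_eq_of_le (WithBot.coe_le_coe.mp hb) with h' | h'
              · exact Or.inl h'
              · exact Or.inr ⟨h', hlk'⟩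
            · exact absurd heqq hlk
            · have hb : degZ (v' l) + (s l : WithBot ℤ) < ((e : ℤ) : WithBot ℤ) :=
                sub_entry_lt hlt (hblt l hgt')
              rw [hxl'] at hb
              exact Or.inl (WithBot.coe_lt_coe.mp hb)
          · have hb : degZ (v' l) + (s l : WithBot ℤ) ≤ ((e : ℤ) : WithBot ℤ) :=
              sub_entry_le heq.le (hble l)
            rw [hxl'] at hb
            rcases lt_or_eq_of_le (WithBot.coe_le_coe.mp hb) with h' | h'
            · exact Or.inl h'
            · refine Or.inr ⟨h', ?_⟩
              have hlT : l ∈ T := by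
                rw [hT_def, Finset.mem_filter]
                refine ⟨Finset.mem_univ l, hli, ?_⟩
                rw [heq]
                exact WithBot.coe_le_coe.mpr (by omega)
              have hxvl : xv l = e := by
                have h2 := (hval l hlT).1
                rw [heq] at h2
                exact (WithBot.coe_inj.mp h2).symm
              rcases hlex l hlT with h2 | ⟨_, hlval⟩
              · omega
              · have hne : l.val ≠ k.val := fun hv => hlk (Fin.ext hv)
                omega
          · exfalso
            have hpert : degZ ((c • q k) l) + (s l : WithBot ℤ) < degZ (v l) + (s l : WithBot ℤ) :=
              lt_of_le_of_lt (hble l) hgt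
            have hsub := sub_small (a := v l) (b := (c • q k) l) hpert
            have hx'eq : degZ (v' l) = degZ (v l) := hsub.1
            rw [hx'eq] at hxl'
            have hlT : l ∈ T := by
              rw [hT_def, Finset.mem_filter]
              refine ⟨Finset.mem_univ l, hli, ?_⟩
              rw [hxl']
              exact WithBot.coe_le_coe.mpr hdl'
            have hxvl : xv l = e' := by
              have h2 := (hval l hlT).1
              rw [hxl'] at h2
              exact (WithBot.coe_inj.mp h2).symm
            have hegt : (e : ℤ) < e' := by
              rw [hxl'] at hgt
              exact WithBot.coe_lt_coe.mp hgt
            rcases hlex l hlT with h2 | ⟨h2, _⟩ <;> omega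
      have hek_lt_n : (e - B).toNat * m + k.val < n := hviol k e hki hxk hddk
      refine ih ((e - B).toNat * m + k.val) hek_lt_n v' hv'M hv'piv hv'sdeg hv'i_mon ?_
      intro l e' hli hxl' hdl'
      exact toNat_lex_lt ((hB l).trans hdl') l.isLt (hnew l e' hli hxl' hdl')
  refine key ((dd i - B).toNat * m + m) (q i) (hqM i) (hq_piv i) (hq_sdeg i) (hq_mon i) ?_
  intro l e hli hxl hdl
  have h1 : ((e : ℤ) : WithBot ℤ) ≤ ((dd i : ℤ) : WithBot ℤ) := by
    rw [← hxl, ← hq_sdeg i]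
    exact entry_le_sdeg (q i) l
  have h2 : e ≤ dd i := WithBot.coe_le_coe.mp h1
  have h3 : (e - B).toNat ≤ (dd i - B).toNat := by omega
  have h4 := Nat.mul_le_mul_right m h3
  have h5 := l.isLt
  omega

end Reduce

section Main
variable {m : ℕ} {s : Fin m → ℤ}

local notation "V" => Fin m → Polynomial K

lemma degZ_nonneg_of_coe {p : K[X]} {a : ℤ} (h : degZ p = (a : WithBot ℤ)) : 0 ≤ a := by
  have hp : p ≠ 0 := by
    intro h0
    rw [h0, degZ_zero] at h
    exact absurd h (by simp)
  rw [degZ_eq_natDegree hp] at h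
  have := WithBot.coe_inj.mp h
  omega

lemma degZ_lt_of_degree_lt {p q : K[X]} (h : p.degree < q.degree) : degZ p < degZ q := by
  unfold degZ
  cases hq : q.degree with
  | bot => rw [hq] at h; exact absurd h (by simp)
  | coe nq =>
      cases hp : p.degree with
      | bot => exact WithBot.bot_lt_coe _
      | coe np =>
          rw [hp, hq] at h
          simp only [WithBot.map_coe, WithBot.coe_lt_coe]
          exact_mod_cast h

lemma degree_eq_of_degZ_eq {p q : K[X]} (h : degZ p = degZ q) : p.degree = q.degree :=
  le_antisymm (degZ_le_degZ_iff.mp h.le) (degZ_le_degZ_iff.mp h.ge)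

lemma pivot_diag_deg {v : V} {j : Fin m} {z : ℤ} (hpiv : IsPivotIndex s v j)
    (hs : sdeg s v = (z : WithBot ℤ)) :
    degZ (v j) = ((z - s j : ℤ) : WithBot ℤ) ∧ s j ≤ z := by
  have h := hpiv.1
  rw [hs] at h
  have hd : degZ (v j) = ((z - s j : ℤ) : WithBot ℤ) := by
    cases hdd : degZ (v j) with
    | bot => rw [hdd, WithBot.bot_add] at h; exact absurd h (by simp)
    | coe a =>
        rw [hdd, ← WithBot.coe_add, WithBot.coe_inj] at h
        rw [WithBot.coe_inj]
        omega
  have := degZ_nonneg_of_coe hd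
  exact ⟨hd, by omega⟩

lemma degZ_C_mul {a : K} (ha : a ≠ 0) (x : K[X]) :
    degZ (Polynomial.C a * x) = degZ x := by
  rw [degZ_mul]
  have h : degZ (Polynomial.C a) = ((0 : ℤ) : WithBot ℤ) := by
    unfold degZ
    rw [Polynomial.degree_C ha]
    rfl
  rw [h]
  rw [show ((0 : ℤ) : WithBot ℤ) = (0 : WithBot ℤ) from rfl, zero_add]

lemma smulC_entry (a : K) (p : V) (l : Fin m) :
    (Polynomial.C a • p) l = Polynomial.C a * p l := rfl

lemma smulC_sdeg {a : K} (ha : a ≠ 0) (p : V) : sdeg s (Polynomial.C a • p) = sdeg s p := by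
  unfold sdeg
  apply Finset.sup_congr rfl
  intro j _
  rw [smulC_entry, degZ_C_mul ha]

lemma smulC_pivot {a : K} (ha : a ≠ 0) {p : V} {j : Fin m} (h : IsPivotIndex s p j) :
    IsPivotIndex s (Polynomial.C a • p) j := by
  constructor
  · rw [smulC_sdeg ha, smulC_entry, degZ_C_mul ha]
    exact h.1
  · intro k hk
    rw [smulC_sdeg ha, smulC_entry, degZ_C_mul ha]
    exact h.2 k hk

lemma single_pivot {c : K[X]} (hc : c ≠ 0) (j : Fin m) :
    IsPivotIndex s (Pi.single j c) j ∧ (Pi.single j c : V) ≠ 0 := by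
  have hdj : degZ ((Pi.single j c : V) j) = degZ c := by rw [Pi.single_eq_same]
  have hbot : ∀ l, l ≠ j → degZ ((Pi.single j c : V) l) + (s l : WithBot ℤ) = ⊥ := by
    intro l hl
    rw [Pi.single_eq_of_ne hl, degZ_zero, WithBot.bot_add]
  have hne : degZ c + (s j : WithBot ℤ) ≠ ⊥ := by
    intro h
    rcases WithBot.add_eq_bot.mp h with h' | h'
    · exact hc (degZ_eq_bot_iff.mp h')
    · exact WithBot.coe_ne_bot h'
  have hsd : sdeg s (Pi.single j c) = degZ c + (s j : WithBot ℤ) := by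
    refine le_antisymm (sdeg_le_iff.mpr ?_) ?_
    · intro l
      by_cases hl : l = j
      · subst hl
        rw [hdj]
      · rw [hbot l hl]
        exact bot_le
    · have := entry_le_sdeg (s := s) (Pi.single j c) j
      rwa [hdj] at this
  refine ⟨⟨by rw [hsd, hdj], fun k hk => ?_⟩, fun h0 => ?_⟩
  · rw [hbot k (ne_of_gt hk), hsd]
    exact fun h => hne h.symm
  · have h1 : (Pi.single j c : V) j = 0 := by rw [h0]; rfl
    rw [Pi.single_eq_same] at h1
    exact hc h1

lemma row_mem_of_span_eq {M : Submodule (Polynomial K) (Fin m → Polynomial K)}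
    {P : Matrix (Fin m) (Fin m) (Polynomial K)}
    (hs : (Submodule.span (Polynomial K) (Set.range fun i => P i) :
      Set (Fin m → Polynomial K)) = ↑M) (j : Fin m) : P j ∈ M := by
  have h : (P j) ∈ (Submodule.span (Polynomial K) (Set.range fun i => P i) :
      Set (Fin m → Polynomial K)) := Submodule.subset_span ⟨j, rfl⟩
  rw [hs] at h
  exact h

lemma popov_basis_eq (M : Submodule (Polynomial K) (Fin m → Polynomial K))
    (P1 P2 : Matrix (Fin m) (Fin m) (Polynomial K))
    (h1 : IsPopov s P1) (h2 : IsPopov s P2)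
    (hs1 : (Submodule.span (Polynomial K) (Set.range fun i => P1 i) :
      Set (Fin m → Polynomial K)) = ↑M)
    (hs2 : (Submodule.span (Polynomial K) (Set.range fun i => P2 i) :
      Set (Fin m → Polynomial K)) = ↑M) : P1 = P2 := by
  classical
  obtain ⟨hdet1, hpiv1, hmon1, hcol1⟩ := h1
  obtain ⟨hdet2, hpiv2, hmon2, hcol2⟩ := h2
  have hrow01 : ∀ j, (P1 j : V) ≠ 0 := fun j h0 => (hmon1 j).ne_zero (congrFun h0 j)
  have hrow02 : ∀ j, (P2 j : V) ≠ 0 := fun j h0 => (hmon2 j).ne_zero (congrFun h0 j)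
  choose dd1 hdd1 using fun j => exists_sdeg_coe (s := s) (hrow01 j)
  choose dd2 hdd2 using fun j => exists_sdeg_coe (s := s) (hrow02 j)
  have hmin : ∀ (P : Matrix (Fin m) (Fin m) (Polynomial K)) (dd : Fin m → ℤ),
      (∀ j, sdeg s (P j) = (dd j : WithBot ℤ)) → (∀ j, IsPivotIndex s (P j) j) →
      (∀ j, (P j j).Monic) →
      (Submodule.span (Polynomial K) (Set.range fun i => P i) :
        Set (Fin m → Polynomial K)) = ↑M →
      ∀ v, v ∈ M → v ≠ 0 → ∀ k, IsPivotIndex s v k → ∀ z : ℤ,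
        sdeg s v = (z : WithBot ℤ) → dd k ≤ z := by
    intro P dd hsdeg hpiv hmon hs v hvM hv0 k hk z hz
    have hvs : v ∈ Submodule.span (Polynomial K) (Set.range fun i => P i) := by
      have : v ∈ (Submodule.span (Polynomial K) (Set.range fun i => P i) :
          Set (Fin m → Polynomial K)) := by rw [hs]; exact hvM
      exact this
    obtain ⟨c, hc⟩ := (Submodule.mem_span_range_iff_exists_fun (Polynomial K)).mp hvs
    have hc0 : c ≠ 0 := by
      intro h0
      rw [h0] at hc
      simp only [Pi.zero_apply, zero_smul, Finset.sum_const_zero] at hc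
      exact hv0 hc.symm
    obtain ⟨d', i', hci', hv0', hsd', hpiv', hge'⟩ :=
      combo_props (q := fun i => P i) hsdeg hpiv hmon hc0
    rw [hc] at hsd' hpiv'
    have hik : i' = k := pivot_unique hpiv' hk
    subst hik
    rw [hz] at hsd'
    have : z = d' := WithBot.coe_inj.mp hsd'
    omega
  have hmin1 := hmin P1 dd1 hdd1 hpiv1 hmon1 hs1
  have hmin2 := hmin P2 dd2 hdd2 hpiv2 hmon2 hs2
  have hrowM1 : ∀ j, (P1 j : V) ∈ M := row_mem_of_span_eq hs1
  have hrowM2 : ∀ j, (P2 j : V) ∈ M := row_mem_of_span_eq hs2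
  have hddeq : ∀ j, dd1 j = dd2 j := by
    intro j
    have h12 : dd1 j ≤ dd2 j := hmin1 (P2 j) (hrowM2 j) (hrow02 j) j (hpiv2 j) (dd2 j) (hdd2 j)
    have h21 : dd2 j ≤ dd1 j := hmin2 (P1 j) (hrowM1 j) (hrow01 j) j (hpiv1 j) (dd1 j) (hdd1 j)
    omega
  have hdiag1 : ∀ j, degZ (P1 j j) = ((dd1 j - s j : ℤ) : WithBot ℤ) :=
    fun j => (pivot_diag_deg (hpiv1 j) (hdd1 j)).1
  have hdiag2 : ∀ j, degZ (P2 j j) = ((dd1 j - s j : ℤ) : WithBot ℤ) := by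
    intro j
    rw [hddeq j]
    exact (pivot_diag_deg (hpiv2 j) (hdd2 j)).1
  funext i
  by_contra hne
  have hv0 : (P1 i - P2 i : V) ≠ 0 := sub_ne_zero.mpr hne
  have hvM : (P1 i - P2 i : V) ∈ M := M.sub_mem (hrowM1 i) (hrowM2 i)
  have hentry : ∀ l, degZ ((P1 i - P2 i : V) l) + (s l : WithBot ℤ) <
      ((dd1 l : ℤ) : WithBot ℤ) := by
    intro l
    by_cases hl : l = i
    · subst hl
      have hdeq : (P1 l l).degree = (P2 l l).degree :=
        degree_eq_of_degZ_eq (by rw [hdiag1 l, hdiag2 l])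
      have hsub : (P1 l l - P2 l l).degree < (P1 l l).degree :=
        Polynomial.degree_sub_lt hdeq (hmon1 l).ne_zero
          (by rw [(hmon1 l).leadingCoeff, (hmon2 l).leadingCoeff])
      have hz : degZ (P1 l l - P2 l l) < ((dd1 l - s l : ℤ) : WithBot ℤ) := by
        rw [← hdiag1 l]
        exact degZ_lt_of_degree_lt hsub
      exact wb_add_lt_iff.mpr hz
    · have hb1 : degZ (P1 i l) < ((dd1 l - s l : ℤ) : WithBot ℤ) := by
        rw [← hdiag1 l]
        exact degZ_lt_of_degree_lt (hcol1 i l (Ne.symm hl))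
      have hb2 : degZ (P2 i l) < ((dd1 l - s l : ℤ) : WithBot ℤ) := by
        rw [← hdiag2 l]
        exact degZ_lt_of_degree_lt (hcol2 i l (Ne.symm hl))
      exact sub_entry_lt (wb_add_lt_iff.mpr hb1) (wb_add_lt_iff.mpr hb2)
  obtain ⟨z, hz⟩ := exists_sdeg_coe (s := s) hv0
  obtain ⟨k, hk⟩ := exists_pivot (s := s) hv0
  have hzk : dd1 k ≤ z := hmin1 _ hvM hv0 k hk z hz
  have hattain := hk.1
  rw [hz] at hattain
  have := hentry k
  rw [hattain] at this
  have := WithBot.coe_lt_coe.mp this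
  omega

theorem main_general (hm : 1 ≤ m) (M : Submodule (Polynomial K) (Fin m → Polynomial K))
    (hMfull : ∀ j : Fin m, ∃ g, g ∈ M ∧ g ≠ 0 ∧ IsPivotIndex s g j) :
    ∃! P : Matrix (Fin m) (Fin m) (Polynomial K),
      IsPopov s P ∧ (LinearIndependent (Polynomial K) (fun i => P i) ∧
        (Submodule.span (Polynomial K) (Set.range fun i => P i) :
          Set (Fin m → Polynomial K)) = ↑M) := by
  classical
  have hdd : ∀ j : Fin m, ∃ d : ℤ,
      (∃ v, (v ∈ M ∧ v ≠ 0 ∧ IsPivotIndex s v j) ∧ sdeg s v = (d : WithBot ℤ)) ∧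
      ∀ e : ℤ, (∃ v, (v ∈ M ∧ v ≠ 0 ∧ IsPivotIndex s v j) ∧ sdeg s v = (e : WithBot ℤ)) →
        d ≤ e := by
    intro j
    have hbdd : ∃ b : ℤ, ∀ z : ℤ,
        (∃ v, (v ∈ M ∧ v ≠ 0 ∧ IsPivotIndex s v j) ∧ sdeg s v = (z : WithBot ℤ)) → b ≤ z := by
      refine ⟨s j, ?_⟩
      rintro z ⟨v, ⟨_, _, hpiv⟩, hsv⟩
      exact (pivot_diag_deg hpiv hsv).2
    have hinh : ∃ z : ℤ, ∃ v, (v ∈ M ∧ v ≠ 0 ∧ IsPivotIndex s v j) ∧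
        sdeg s v = (z : WithBot ℤ) := by
      obtain ⟨g, hgM, hg0, hgpiv⟩ := hMfull j
      obtain ⟨z, hzz⟩ := exists_sdeg_coe hg0
      exact ⟨z, g, ⟨hgM, hg0, hgpiv⟩, hzz⟩
    obtain ⟨lb, hl1, hl2⟩ := Int.exists_least_of_bdd hbdd hinh
    exact ⟨lb, hl1, hl2⟩
  choose dd hddmem hddmin using hdd
  choose q0 hq0 hq0sdeg using hddmem
  have hq00 : ∀ j, (q0 j) j ≠ 0 := by
    intro j h0
    have := (pivot_diag_deg (hq0 j).2.2 (hq0sdeg j)).1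
    rw [h0, degZ_zero] at this
    exact absurd this (by simp)
  set q : Fin m → V := fun j => Polynomial.C (((q0 j) j).leadingCoeff)⁻¹ • q0 j with hq_def
  have hainv : ∀ j, (((q0 j) j).leadingCoeff)⁻¹ ≠ 0 :=
    fun j => inv_ne_zero (Polynomial.leadingCoeff_ne_zero.mpr (hq00 j))
  have hqM : ∀ j, q j ∈ M := fun j => M.smul_mem _ (hq0 j).1
  have hq_sdeg : ∀ j, sdeg s (q j) = ((dd j : ℤ) : WithBot ℤ) := by
    intro j
    rw [hq_def]
    rw [smulC_sdeg (hainv j)]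
    exact hq0sdeg j
  have hq_piv : ∀ j, IsPivotIndex s (q j) j := fun j => smulC_pivot (hainv j) (hq0 j).2.2
  have hq_mon : ∀ j, ((q j) j).Monic := by
    intro j
    show (Polynomial.C (((q0 j) j).leadingCoeff)⁻¹ * (q0 j) j).Monic
    rw [mul_comm]
    exact Polynomial.monic_mul_leadingCoeff_inv (hq00 j)
  have hmin : ∀ v ∈ M, v ≠ 0 → ∀ k, IsPivotIndex s v k →
      ((dd k : ℤ) : WithBot ℤ) ≤ sdeg s v := by
    intro v hvM hv0 k hk
    obtain ⟨z, hz⟩ := exists_sdeg_coe (s := s) hv0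
    rw [hz, WithBot.coe_le_coe]
    exact hddmin k z ⟨v, ⟨hvM, hv0, hk⟩, hz⟩
  have : Nonempty (Fin m) := ⟨⟨0, hm⟩⟩
  set B : ℤ := Finset.univ.inf' Finset.univ_nonempty dd with hB_def
  have hB : ∀ j, B ≤ dd j := fun j => Finset.inf'_le dd (Finset.mem_univ j)
  choose p hpM hppiv hpsdeg hpmon hpcol using
    fun i => reduce hq_sdeg hq_piv hq_mon M hqM hB i
  set P : Matrix (Fin m) (Fin m) (Polynomial K) := Matrix.of (fun i j => p i j) with hP_def
  have hProws : (fun i => P i) = p := rfl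
  have hindep : LinearIndependent (Polynomial K) (fun i => P i) := by
    rw [hProws]
    exact rows_linearIndependent hpsdeg hppiv hpmon
  have hspan : (Submodule.span (Polynomial K) (Set.range fun i => P i) :
      Set (Fin m → Polynomial K)) = ↑M := by
    rw [hProws]
    have hle : Submodule.span (Polynomial K) (Set.range p) ≤ M := by
      rw [Submodule.span_le]
      rintro _ ⟨i, rfl⟩
      exact hpM i
    have hge : M ≤ Submodule.span (Polynomial K) (Set.range p) :=
      fun v hv => generation hpsdeg hppiv hpmon M hpM hmin hB v hv
    rw [le_antisymm hle hge]
  have hpopov : IsPopov s P := by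
    refine ⟨?_, ?_, ?_, ?_⟩
    · intro hdet
      obtain ⟨g, hg0, hgP⟩ := Matrix.exists_vecMul_eq_zero_iff.mpr hdet
      obtain ⟨d', i', _, hv0', _⟩ := combo_props hpsdeg hppiv hpmon hg0
      apply hv0'
      funext l
      have h1 : (∑ j, g j • p j) l = ∑ j, g j * p j l := by
        rw [sum_smul_apply]
        rfl
      have h2 : (g ᵥ* P) l = ∑ j, g j * p j l := rfl
      rw [h1, ← h2, hgP]
    · exact fun i => hppiv i
    · exact fun i => hpmon i
    · intro i j hij
      have hdiag : degZ (p j j) = ((dd j - s j : ℤ) : WithBot ℤ) :=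
        (pivot_diag_deg (hppiv j) (hpsdeg j)).1
      have hcol := hpcol i j (Ne.symm hij)
      have hlt : degZ (p i j) < ((dd j - s j : ℤ) : WithBot ℤ) := wb_add_lt_iff.mp hcol
      rw [← hdiag] at hlt
      exact degree_lt_degree_of_degZ_lt hlt
  refine ⟨P, ⟨hpopov, hindep, hspan⟩, ?_⟩
  intro P' hP'
  exact popov_basis_eq M P' P hP'.1 hpopov hP'.2.2 hspan

end Main

section Interp

variable {m σ : ℕ}

lemma sum_vecMul' {n σ' : Type*} [Fintype n] [Fintype σ'] {ι : Type*} (t : Finset ι)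
    (w : ι → n → K) (C : Matrix n σ' K) :
    Matrix.vecMul (∑ i ∈ t, w i) C = ∑ i ∈ t, Matrix.vecMul (w i) C := by
  classical
  induction t using Finset.induction with
  | empty => simp [Matrix.zero_vecMul]
  | @insert a t ha ih =>
      rw [Finset.sum_insert ha, Finset.sum_insert ha, Matrix.add_vecMul, ih]

noncomputable def interpM (E : Matrix (Fin m) (Fin σ) K) (J : Matrix (Fin σ) (Fin σ) K) :
    Submodule (Polynomial K) (Fin m → Polynomial K) where
  carrier := {p | IsInterpolant E J p}
  add_mem' := by
    intro a b ha hb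
    have ha' : IsInterpolant E J a := ha
    have hb' : IsInterpolant E J b := hb
    show IsInterpolant E J (a + b)
    unfold IsInterpolant at *
    calc ∑ i, Matrix.vecMul (E i) (Polynomial.aeval J ((a + b) i))
        = ∑ i, (Matrix.vecMul (E i) (Polynomial.aeval J (a i)) +
            Matrix.vecMul (E i) (Polynomial.aeval J (b i))) := by
          refine Finset.sum_congr rfl fun i _ => ?_
          rw [Pi.add_apply, map_add, Matrix.vecMul_add]
      _ = 0 := by rw [Finset.sum_add_distrib, ha', hb', add_zero]
  zero_mem' := by
    show IsInterpolant E J 0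
    unfold IsInterpolant
    simp
  smul_mem' := by
    intro c p hp
    have hp' : IsInterpolant E J p := hp
    show IsInterpolant E J (c • p)
    unfold IsInterpolant at *
    calc ∑ i, Matrix.vecMul (E i) (Polynomial.aeval J ((c • p) i))
        = ∑ i, Matrix.vecMul (Matrix.vecMul (E i) (Polynomial.aeval J (p i)))
            (Polynomial.aeval J c) := by
          refine Finset.sum_congr rfl fun i _ => ?_
          have h1 : (c • p) i = p i * c := by rw [Pi.smul_apply, smul_eq_mul, mul_comm]
          rw [h1, _root_.map_mul, Matrix.vecMul_vecMul]
      _ = Matrix.vecMul (∑ i, Matrix.vecMul (E i) (Polynomial.aeval J (p i)))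
            (Polynomial.aeval J c) := (sum_vecMul' Finset.univ _ _).symm
      _ = 0 := by rw [hp', Matrix.zero_vecMul]

lemma charpoly_single_mem (E : Matrix (Fin m) (Fin σ) K) (J : Matrix (Fin σ) (Fin σ) K)
    (j : Fin m) :
    (Pi.single j (Matrix.charpoly J) : Fin m → Polynomial K) ∈ interpM E J := by
  show IsInterpolant E J _
  unfold IsInterpolant
  rw [Finset.sum_eq_single j]
  · rw [Pi.single_eq_same, Matrix.aeval_self_charpoly, Matrix.vecMul_zero]
  · intro i _ hij
    rw [Pi.single_eq_of_ne hij, map_zero, Matrix.vecMul_zero]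
  · intro h
    exact absurd (Finset.mem_univ j) h

end Interp

end PopovAux

/-- existence and uniqueness of the interpolation basis for `(E, J)` in
`s`-Popov form. -/
theorem existsUnique_popov_interpolation_basis {K : Type*} [Field K] {m σ : ℕ}
    (hm : 1 ≤ m) (hσ : 1 ≤ σ)
    (E : Matrix (Fin m) (Fin σ) K) (J : Matrix (Fin σ) (Fin σ) K) (s : Fin m → ℤ) :
    ∃! P : Matrix (Fin m) (Fin m) (Polynomial K),
      IsPopov s P ∧ IsInterpolationBasis E J P := by
  have hχ : (Matrix.charpoly J) ≠ 0 := (Matrix.charpoly_monic J).ne_zero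
  obtain ⟨P, ⟨hpop, hind, hspan⟩, huniq⟩ :=
    PopovAux.main_general (s := s) hm (PopovAux.interpM E J)
      (fun j => ⟨Pi.single j (Matrix.charpoly J),
        PopovAux.charpoly_single_mem E J j,
        (PopovAux.single_pivot (s := s) hχ j).2,
        (PopovAux.single_pivot (s := s) hχ j).1⟩)
  exact ⟨P, ⟨hpop, hind, hspan⟩, fun Q hQ => huniq Q ⟨hQ.1, hQ.2.1, hQ.2.2⟩⟩
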